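/- Let ν and κ be partitions with at most r parts, with β-number sequences β_r(ν) = (α_1,...,α_r) and β_r(κ) = (β_1,...,β_r) relative to a fixed charge s. If there exist b ∈ {1,...,r} and a positive integer h such that the set of β-numbers of ν equals {β_1,...,β_{b-1}, β_b - h, β_{b+1},...,β_r} (a set of r distinct integers), then ν ⊆ κ and the skew diagram κ/ν is a ribbon of length h. -/

import Mathlib

/-- Two boxes share a common side. -/
def Adj (a b : ℕ × ℕ) : Prop :=
  (a.1 = b.1 ∧ (a.2 = b.2 + 1 ∨ b.2 = a.2 + 1)) ∨
  (a.2 = b.2 ∧ (a.1 = b.1 + 1 ∨ b.1 = a.1 + 1))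

/-- A diagram is connected if any two of its boxes are joined by a path of
side-adjacent boxes lying inside the diagram. -/
def IsConnectedDiagram (θ : Set (ℕ × ℕ)) : Prop :=
  ∀ a ∈ θ, ∀ b ∈ θ, Relation.ReflTransGen (fun x y => y ∈ θ ∧ Adj x y) a b

/-- The diagram contains no 2×2 block of boxes. -/
def NoSquare (θ : Set (ℕ × ℕ)) : Prop :=
  ¬ ∃ i j : ℕ, (i, j) ∈ θ ∧ (i + 1, j) ∈ θ ∧ (i, j + 1) ∈ θ ∧ (i + 1, j + 1) ∈ θ

/-- A ribbon: a nonempty connected diagram with no 2×2 block of boxes. -/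
def IsRibbon (θ : Set (ℕ × ℕ)) : Prop :=
  θ.Nonempty ∧ IsConnectedDiagram θ ∧ NoSquare θ

/-- Young diagram (rows and columns numbered from 1) of a partition with
at most `r` parts, given as `f : Fin r → ℕ`. -/
def cellsF {r : ℕ} (f : Fin r → ℕ) : Set (ℕ × ℕ) :=
  {p | ∃ i : Fin r, p.1 = (i : ℕ) + 1 ∧ 1 ≤ p.2 ∧ p.2 ≤ f i}

/-- The β-number `λ_i + s + 1 - i` (0-based index `i : Fin r`). -/
def betaNum {r : ℕ} (s : ℤ) (f : Fin r → ℕ) (i : Fin r) : ℤ :=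
  (f i : ℤ) + s - (i : ℤ)

/-- The set of β-numbers. -/
def betaFinset {r : ℕ} (s : ℤ) (f : Fin r → ℕ) : Finset ℤ :=
  Finset.image (betaNum s f) Finset.univ

/-- Dominance: all partial sums of `ν` are at most those of `κ`. -/
def Dominates {r : ℕ} (ν κ : Fin r → ℕ) : Prop :=
  ∀ k : Fin r, ∑ i ∈ Finset.univ.filter (· ≤ k), ν i ≤ ∑ i ∈ Finset.univ.filter (· ≤ k), κ i

/-- Strict dominance. -/
def StrictlyDominates {r : ℕ} (ν κ : Fin r → ℕ) : Prop :=
  Dominates ν κ ∧ ν ≠ κ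

private lemma card_filter_lt' {r : ℕ} (i : Fin r) :
    (Finset.univ.filter (fun j => j < i)).card = (i : ℕ) := by
  have h : Finset.univ.filter (fun j => j < i) = Finset.Iio i := by ext j; simp
  rw [h, Fin.card_Iio]

private lemma rank_eq' {r : ℕ} {f : Fin r → ℤ} (hf : StrictAnti f) (i : Fin r) :
    ((Finset.image f Finset.univ).filter (fun z => f i < z)).card = (i : ℕ) := by
  have heq : (Finset.image f Finset.univ).filter (fun z => f i < z)
      = Finset.image f (Finset.univ.filter (fun j => j < i)) := by
    ext z
    simp only [Finset.mem_filter, Finset.mem_image, Finset.mem_univ, true_and]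
    constructor
    · rintro ⟨⟨j, rfl⟩, hlt⟩
      exact ⟨j, ⟨hf.lt_iff_gt.mp hlt, rfl⟩⟩
    · rintro ⟨j, hj, rfl⟩
      exact ⟨⟨j, rfl⟩, hf hj⟩
  rw [heq, Finset.card_image_of_injective _ hf.injective, card_filter_lt']

private lemma rank_unique' {r : ℕ} {f : Fin r → ℤ} (hf : StrictAnti f) {i : Fin r} {z : ℤ}
    (hz : z ∈ Finset.image f Finset.univ)
    (hc : ((Finset.image f Finset.univ).filter (fun w => z < w)).card = (i : ℕ)) :
    f i = z := by
  simp only [Finset.mem_image, Finset.mem_univ, true_and] at hz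
  obtain ⟨j, rfl⟩ := hz
  have h2 := rank_eq' hf j
  have : (i : ℕ) = (j : ℕ) := by rw [← hc, h2]
  exact congrArg f (Fin.ext this)

/-- If the β-numbers of ν are obtained from those of κ by replacing β_b with β_b - h
(all r resulting integers distinct), then ν ⊆ κ and κ/ν is a ribbon of length h. -/
theorem stmt6 (r : ℕ) (s : ℤ) (ν κ : Fin r → ℕ) (hν : Antitone ν) (hκ : Antitone κ)
    (b : Fin r) (h : ℕ) (hh : 0 < h)
    (hdistinct : ∀ j : Fin r, j ≠ b → betaNum s κ j ≠ betaNum s κ b - (h : ℤ))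
    (hβ : betaFinset s ν =
      insert (betaNum s κ b - (h : ℤ)) ((betaFinset s κ).erase (betaNum s κ b))) :
    cellsF ν ⊆ cellsF κ ∧ IsRibbon (cellsF κ \ cellsF ν) ∧
      (cellsF κ \ cellsF ν).ncard = h := by
  classical
  simp only [betaFinset] at hβ
  set x := betaNum s κ b - (h : ℤ) with hx_def
  have hhz : (0 : ℤ) < (h : ℤ) := by exact_mod_cast hh
  have hg : StrictAnti (betaNum s κ) := by
    intro i j hij
    have h1 : κ j ≤ κ i := hκ hij.le
    have h2 : (i : ℕ) < (j : ℕ) := hij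
    simp only [betaNum]; omega
  have hf : StrictAnti (betaNum s ν) := by
    intro i j hij
    have h1 : ν j ≤ ν i := hν hij.le
    have h2 : (i : ℕ) < (j : ℕ) := hij
    simp only [betaNum]; omega
  have hxy : x < betaNum s κ b := by rw [hx_def]; omega
  have hgx : ∀ j : Fin r, betaNum s κ j ≠ x := by
    intro j
    by_cases hj : j = b
    · subst hj; rw [hx_def]; omega
    · exact hdistinct j hj
  have hxA : x ∉ Finset.image (betaNum s κ) Finset.univ := by
    simp only [Finset.mem_image, Finset.mem_univ, true_and]
    rintro ⟨j, hj⟩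
    exact hgx j hj
  have hyA : betaNum s κ b ∈ Finset.image (betaNum s κ) Finset.univ :=
    Finset.mem_image_of_mem _ (Finset.mem_univ b)
  have key : ∀ z : ℤ,
      ((Finset.image (betaNum s ν) Finset.univ).filter (fun w => z < w)).card
        + (if z < betaNum s κ b then 1 else 0)
      = ((Finset.image (betaNum s κ) Finset.univ).filter (fun w => z < w)).card
        + (if z < x then 1 else 0) := by
    intro z
    rw [hβ, Finset.filter_insert, Finset.filter_erase]
    by_cases h1 : z < x
    · rw [if_pos h1, if_pos h1, if_pos (lt_trans h1 hxy)]
      have hymem : betaNum s κ b ∈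
          (Finset.image (betaNum s κ) Finset.univ).filter (fun w => z < w) :=
        Finset.mem_filter.mpr ⟨hyA, lt_trans h1 hxy⟩
      rw [Finset.card_insert_of_notMem (fun hmem =>
        hxA (Finset.mem_of_mem_filter _ (Finset.mem_of_mem_erase hmem)))]
      rw [Finset.card_erase_of_mem hymem]
      have hpos : 1 ≤ ((Finset.image (betaNum s κ) Finset.univ).filter
          (fun w => z < w)).card := Finset.card_pos.mpr ⟨_, hymem⟩
      omega
    · rw [if_neg h1, if_neg h1]
      by_cases h2 : z < betaNum s κ b
      · rw [if_pos h2]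
        have hymem : betaNum s κ b ∈
            (Finset.image (betaNum s κ) Finset.univ).filter (fun w => z < w) :=
          Finset.mem_filter.mpr ⟨hyA, h2⟩
        rw [Finset.card_erase_of_mem hymem]
        have hpos : 1 ≤ ((Finset.image (betaNum s κ) Finset.univ).filter
            (fun w => z < w)).card := Finset.card_pos.mpr ⟨_, hymem⟩
        omega
      · rw [if_neg h2, Finset.erase_eq_of_notMem
          (fun hmem => h2 (Finset.mem_filter.mp hmem).2)]
  have hxB : x ∈ Finset.image (betaNum s ν) Finset.univ := by
    rw [hβ]; exact Finset.mem_insert_self _ _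
  obtain ⟨c, hc⟩ : ∃ c : Fin r, betaNum s ν c = x := by
    simpa only [Finset.mem_image, Finset.mem_univ, true_and] using hxB
  have hAx : ((Finset.image (betaNum s κ) Finset.univ).filter (fun w => x < w)).card
      = (c : ℕ) + 1 := by
    have h1 := rank_eq' hf c
    rw [hc] at h1
    have h2 := key x
    rw [if_pos hxy, if_neg (lt_irrefl x)] at h2
    omega
  have hchar : ∀ j : Fin r, x < betaNum s κ j ↔ (j : ℕ) ≤ (c : ℕ) := by
    have hSA : (Finset.image (betaNum s κ) Finset.univ).filter (fun w => x < w)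
        = Finset.image (betaNum s κ) (Finset.univ.filter (fun j => x < betaNum s κ j)) := by
      ext z
      simp only [Finset.mem_filter, Finset.mem_image, Finset.mem_univ, true_and]
      constructor
      · rintro ⟨⟨j, rfl⟩, hz⟩; exact ⟨j, hz, rfl⟩
      · rintro ⟨j, hz, rfl⟩; exact ⟨⟨j, rfl⟩, hz⟩
    have hScard : (Finset.univ.filter (fun j => x < betaNum s κ j)).card = (c : ℕ) + 1 := by
      rw [hSA, Finset.card_image_of_injective _ hg.injective] at hAx
      exact hAx
    intro j
    constructor
    · intro hj
      by_contra hcj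
      push_neg at hcj
      have hsub : Finset.Iic j ⊆ Finset.univ.filter (fun k => x < betaNum s κ k) := by
        intro k hk
        simp only [Finset.mem_filter, Finset.mem_univ, true_and]
        exact lt_of_lt_of_le hj (hg.antitone (Finset.mem_Iic.mp hk))
      have hcard := Finset.card_le_card hsub
      rw [Fin.card_Iic, hScard] at hcard
      omega
    · intro hj
      by_contra hcontra
      push_neg at hcontra
      have hsub : Finset.univ.filter (fun k => x < betaNum s κ k) ⊆ Finset.Iio j := by
        intro k hk
        simp only [Finset.mem_filter, Finset.mem_univ, true_and] at hk
        rw [Finset.mem_Iio]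
        by_contra hkj
        push_neg at hkj
        exact absurd (lt_of_lt_of_le hk (le_trans (hg.antitone hkj) hcontra)) (lt_irrefl x)
      have hcard := Finset.card_le_card hsub
      rw [Fin.card_Iio, hScard] at hcard
      omega
  have hbc : (b : ℕ) ≤ (c : ℕ) := (hchar b).mp hxy
  have hgB : ∀ j : Fin r, j ≠ b → betaNum s κ j ∈ Finset.image (betaNum s ν) Finset.univ := by
    intro j hj
    rw [hβ]
    exact Finset.mem_insert_of_mem (Finset.mem_erase.mpr
      ⟨fun hcon => hj (hg.injective hcon), Finset.mem_image_of_mem _ (Finset.mem_univ j)⟩)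
  have hcount : ∀ j : Fin r,
      ((Finset.image (betaNum s ν) Finset.univ).filter (fun w => betaNum s κ j < w)).card
        + (if (b : ℕ) < (j : ℕ) then 1 else 0)
      = (j : ℕ) + (if (c : ℕ) < (j : ℕ) then 1 else 0) := by
    intro j
    have e1 : betaNum s κ j < betaNum s κ b ↔ (b : ℕ) < (j : ℕ) := by
      rw [hg.lt_iff_gt, Fin.lt_def]
    have e2 : betaNum s κ j < x ↔ (c : ℕ) < (j : ℕ) := by
      constructor
      · intro hlt
        by_contra hcon
        push_neg at hcon
        exact absurd (lt_trans ((hchar j).mpr hcon) hlt) (lt_irrefl _)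
      · intro hlt
        have h1 : ¬ x < betaNum s κ j := fun hcon => by
          have := (hchar j).mp hcon; omega
        exact lt_of_le_of_ne (not_lt.mp h1) (hgx j)
    have h2 := key (betaNum s κ j)
    rw [rank_eq' hg j] at h2
    simp only [e1, e2] at h2
    exact h2
  have hmatch : ∀ i j : Fin r, j ≠ b →
      ((Finset.image (betaNum s ν) Finset.univ).filter
        (fun w => betaNum s κ j < w)).card = (i : ℕ) →
      betaNum s ν i = betaNum s κ j :=
    fun i j hj hcard => rank_unique' hf (hgB j hj) hcard
  have hlow : ∀ i : Fin r, (i : ℕ) < (b : ℕ) → ν i = κ i := by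
    intro i hi
    have hne : i ≠ b := fun e => by rw [e] at hi; exact lt_irrefl _ hi
    have hcard : ((Finset.image (betaNum s ν) Finset.univ).filter
        (fun w => betaNum s κ i < w)).card = (i : ℕ) := by
      have h2 := hcount i
      rw [if_neg (by omega), if_neg (by omega)] at h2
      omega
    have heq := hmatch i i hne hcard
    simp only [betaNum] at heq; omega
  have hmid : ∀ i j : Fin r, (b : ℕ) ≤ (i : ℕ) → (i : ℕ) < (c : ℕ) →
      ((j : ℕ) = (i : ℕ) + 1) → ν i + 1 = κ j := by
    intro i j hbi hic hj
    have hne : j ≠ b := fun e => by rw [e] at hj; omega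
    have hcard : ((Finset.image (betaNum s ν) Finset.univ).filter
        (fun w => betaNum s κ j < w)).card = (i : ℕ) := by
      have h2 := hcount j
      rw [if_pos (by omega), if_neg (by omega)] at h2
      omega
    have heq := hmatch i j hne hcard
    simp only [betaNum] at heq; omega
  have hhigh : ∀ i : Fin r, (c : ℕ) < (i : ℕ) → ν i = κ i := by
    intro i hi
    have hne : i ≠ b := fun e => by rw [e] at hi; omega
    have hcard : ((Finset.image (betaNum s ν) Finset.univ).filter
        (fun w => betaNum s κ i < w)).card = (i : ℕ) := by
      have h2 := hcount i
      rw [if_pos (by omega), if_pos (by omega)] at h2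
      omega
    have heq := hmatch i i hne hcard
    simp only [betaNum] at heq; omega
  have hclt : ν c < κ c := by
    have h1 : x < betaNum s κ c := (hchar c).mpr (le_refl _)
    rw [← hc] at h1
    simp only [betaNum] at h1; omega
  have hband : ∀ i : Fin r, ν i ≠ κ i → (b : ℕ) ≤ (i : ℕ) ∧ (i : ℕ) ≤ (c : ℕ) := by
    intro i hne
    constructor
    · by_contra hcon; push_neg at hcon; exact hne (hlow i hcon)
    · by_contra hcon; push_neg at hcon; exact hne (hhigh i hcon)
  have hle : ∀ i : Fin r, ν i ≤ κ i := by
    intro i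
    rcases Nat.lt_or_ge (i : ℕ) (b : ℕ) with h1 | h1
    · exact (hlow i h1).le
    rcases Nat.lt_or_ge (c : ℕ) (i : ℕ) with h2 | h2
    · exact (hhigh i h2).le
    rcases Nat.lt_or_ge (i : ℕ) (c : ℕ) with h3 | h3
    · have hir : (i : ℕ) + 1 < r := lt_of_le_of_lt (Nat.succ_le_of_lt h3) c.isLt
      have heq := hmid i ⟨(i : ℕ) + 1, hir⟩ h1 h3 rfl
      have hκj : κ ⟨(i : ℕ) + 1, hir⟩ ≤ κ i := hκ (by rw [Fin.le_def]; simp)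
      omega
    · have hic : i = c := Fin.ext (by omega)
      rw [hic]; exact hclt.le
  have hDmem : ∀ (i : Fin r) (jc : ℕ),
      (((i : ℕ) + 1, jc) ∈ cellsF κ \ cellsF ν) ↔ (ν i < jc ∧ jc ≤ κ i) := by
    intro i jc
    constructor
    · rintro ⟨⟨i', hi', h1, h2⟩, hnot⟩
      have hii : (i : ℕ) + 1 = (i' : ℕ) + 1 := hi'
      have hieq : i' = i := Fin.ext (by omega)
      subst hieq
      refine ⟨?_, h2⟩
      by_contra hcon
      push_neg at hcon
      exact hnot ⟨i', rfl, h1, hcon⟩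
    · rintro ⟨h1, h2⟩
      refine ⟨⟨i, rfl, by omega, h2⟩, ?_⟩
      rintro ⟨i', hi', h1', h2'⟩
      have hii : (i : ℕ) + 1 = (i' : ℕ) + 1 := hi'
      have hieq : i' = i := Fin.ext (by omega)
      subst hieq
      omega
  have hsubgoal : cellsF ν ⊆ cellsF κ := by
    rintro p ⟨i, h1, h2, h3⟩
    exact ⟨i, h1, h2, le_trans h3 (hle i)⟩
  have adjsymm : ∀ a b : ℕ × ℕ, Adj a b → Adj b a := by
    intro a b hab
    rcases hab with ⟨h1, h2⟩ | ⟨h1, h2⟩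
    · exact Or.inl ⟨h1.symm, h2.symm⟩
    · exact Or.inr ⟨h1.symm, h2.symm⟩
  have hrev : ∀ p q : ℕ × ℕ,
      Relation.ReflTransGen (fun x y => y ∈ cellsF κ \ cellsF ν ∧ Adj x y) p q →
      p ∈ cellsF κ \ cellsF ν →
      q ∈ cellsF κ \ cellsF ν ∧
        Relation.ReflTransGen (fun x y => y ∈ cellsF κ \ cellsF ν ∧ Adj x y) q p := by
    intro p q hpq hp
    induction hpq with
    | refl => exact ⟨hp, Relation.ReflTransGen.refl⟩
    | tail hxc hstep ih =>
        obtain ⟨hcD, hpath⟩ := ih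
        exact ⟨hstep.1, Relation.ReflTransGen.head ⟨hcD, adjsymm _ _ hstep.2⟩ hpath⟩
  have hrowpath : ∀ (d : ℕ) (a : Fin r) (jc : ℕ), ν a < jc → jc ≤ κ a →
      jc = ν a + 1 + d →
      Relation.ReflTransGen (fun x y => y ∈ cellsF κ \ cellsF ν ∧ Adj x y)
        ((a : ℕ) + 1, jc) ((a : ℕ) + 1, ν a + 1) := by
    intro d
    induction d with
    | zero =>
        intro a jc h1 h2 he
        have hje : jc = ν a + 1 := by omega
        rw [hje]
    | succ d ih =>
        intro a jc h1 h2 he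
        have hmem : ((a : ℕ) + 1, ν a + 1 + d) ∈ cellsF κ \ cellsF ν :=
          (hDmem a _).mpr ⟨by omega, by omega⟩
        exact Relation.ReflTransGen.head
          ⟨hmem, Or.inl ⟨rfl, Or.inl (by omega)⟩⟩
          (ih a (ν a + 1 + d) (by omega) (by omega) rfl)
  have hreach : ∀ (m : ℕ) (a : Fin r) (jc : ℕ), (c : ℕ) - (a : ℕ) ≤ m →
      ν a < jc → jc ≤ κ a →
      Relation.ReflTransGen (fun x y => y ∈ cellsF κ \ cellsF ν ∧ Adj x y)
        ((a : ℕ) + 1, jc) ((c : ℕ) + 1, ν c + 1) := by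
    intro m
    induction m with
    | zero =>
        intro a jc hm h1 h2
        have hband' := hband a (by omega)
        have hac : a = c := Fin.ext (by omega)
        subst hac
        exact hrowpath (jc - (ν a + 1)) a jc h1 h2 (by omega)
    | succ m ih =>
        intro a jc hm h1 h2
        have hband' := hband a (by omega)
        by_cases hac : (a : ℕ) = (c : ℕ)
        · have hac' : a = c := Fin.ext hac
          subst hac'
          exact hrowpath (jc - (ν a + 1)) a jc h1 h2 (by omega)
        · have hlt : (a : ℕ) < (c : ℕ) := lt_of_le_of_ne hband'.2 hac
          have hir : (a : ℕ) + 1 < r := lt_of_le_of_lt hlt c.isLt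
          have hk : κ ⟨(a : ℕ) + 1, hir⟩ = ν a + 1 :=
            (hmid a ⟨(a : ℕ) + 1, hir⟩ hband'.1 hlt rfl).symm
          have hνle : ν ⟨(a : ℕ) + 1, hir⟩ ≤ ν a := hν (by rw [Fin.le_def]; simp)
          have hmem : (((⟨(a : ℕ) + 1, hir⟩ : Fin r) : ℕ) + 1, ν a + 1) ∈
              cellsF κ \ cellsF ν :=
            (hDmem ⟨(a : ℕ) + 1, hir⟩ _).mpr ⟨by omega, by omega⟩
          refine Relation.ReflTransGen.trans
            (hrowpath (jc - (ν a + 1)) a jc h1 h2 (by omega)) ?_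
          refine Relation.ReflTransGen.head ⟨hmem, Or.inr ⟨rfl, Or.inr (by simp)⟩⟩ ?_
          exact ih ⟨(a : ℕ) + 1, hir⟩ (ν a + 1) (by simp; omega) (by omega) (by omega)
  have hconn : IsConnectedDiagram (cellsF κ \ cellsF ν) := by
    rintro ⟨p1, p2⟩ hp ⟨q1, q2⟩ hq
    obtain ⟨i, hi, -, -⟩ := hp.1
    obtain ⟨i', hi', -, -⟩ := hq.1
    have hi1 : p1 = (i : ℕ) + 1 := hi
    have hi2 : q1 = (i' : ℕ) + 1 := hi'
    subst hi1
    subst hi2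
    have hpb := (hDmem i p2).mp hp
    have hqb := (hDmem i' q2).mp hq
    have P := hreach (c : ℕ) i p2 (by omega) hpb.1 hpb.2
    have Q := hreach (c : ℕ) i' q2 (by omega) hqb.1 hqb.2
    obtain ⟨-, Qrev⟩ := hrev _ _ Q hq
    exact P.trans Qrev
  have hnosq : NoSquare (cellsF κ \ cellsF ν) := by
    rintro ⟨i0, j0, hs1, hs2, hs3, hs4⟩
    obtain ⟨a, ha, -, -⟩ := hs1.1
    obtain ⟨a2, ha2, -, -⟩ := hs2.1
    have ha' : i0 = (a : ℕ) + 1 := ha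
    have ha2' : i0 + 1 = (a2 : ℕ) + 1 := ha2
    rw [ha'] at hs1
    rw [ha2'] at hs2 hs4
    have e1 := (hDmem a j0).mp hs1
    have e2 := (hDmem a2 j0).mp hs2
    have e4 := (hDmem a2 (j0 + 1)).mp hs4
    obtain ⟨e11, e12⟩ := e1
    obtain ⟨e21, e22⟩ := e2
    obtain ⟨e41, e42⟩ := e4
    have hb1 := hband a (by omega)
    have hb2 := hband a2 (by omega)
    have hkk := hmid a a2 hb1.1 (by omega) (by omega)
    omega
  have hnonempty : (cellsF κ \ cellsF ν).Nonempty :=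
    ⟨((c : ℕ) + 1, ν c + 1), (hDmem c _).mpr ⟨by omega, by omega⟩⟩
  have hFD : (↑(Finset.univ.biUnion (fun i : Fin r =>
      (Finset.Ioc (ν i) (κ i)).image (fun jc => ((i : ℕ) + 1, jc)))) : Set (ℕ × ℕ))
      = cellsF κ \ cellsF ν := by
    ext ⟨p1, p2⟩
    simp only [Finset.mem_coe, Finset.mem_biUnion, Finset.mem_univ, true_and,
      Finset.mem_image, Finset.mem_Ioc, Prod.mk.injEq]
    constructor
    · rintro ⟨i, jc, ⟨hj1, hj2⟩, he1, he2⟩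
      rw [← he1, ← he2]
      exact (hDmem i jc).mpr ⟨hj1, hj2⟩
    · intro hp
      obtain ⟨i, hi, -, -⟩ := hp.1
      have hi1 : p1 = (i : ℕ) + 1 := hi
      subst hi1
      exact ⟨i, p2, (hDmem i p2).mp hp, rfl, rfl⟩
  have hcardF : (Finset.univ.biUnion (fun i : Fin r =>
      (Finset.Ioc (ν i) (κ i)).image (fun jc => ((i : ℕ) + 1, jc)))).card
      = ∑ i : Fin r, (κ i - ν i) := by
    rw [Finset.card_biUnion]
    · refine Finset.sum_congr rfl (fun i _ => ?_)
      rw [Finset.card_image_of_injective _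
        (fun x1 x2 he => (Prod.ext_iff.mp he).2), Nat.card_Ioc]
    · intro i1 _ i2 _ h12
      simp only [Finset.disjoint_left, Finset.mem_image, Finset.mem_Ioc]
      rintro p ⟨jc1, hj1, rfl⟩ ⟨jc2, hj2, he⟩
      have he1 : (i2 : ℕ) + 1 = (i1 : ℕ) + 1 := (Prod.ext_iff.mp he).1
      exact h12 (Fin.ext (by omega)).symm
  have hsumZ : ∑ i : Fin r, ((κ i : ℤ) - (ν i : ℤ)) = (h : ℤ) := by
    have h3 : ∑ z ∈ Finset.image (betaNum s κ) Finset.univ, z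
        = ∑ i : Fin r, betaNum s κ i :=
      Finset.sum_image (fun x1 _ x2 _ e => hg.injective e)
    have h4 : ∑ z ∈ Finset.image (betaNum s ν) Finset.univ, z
        = ∑ i : Fin r, betaNum s ν i :=
      Finset.sum_image (fun x1 _ x2 _ e => hf.injective e)
    have h6 := Finset.sum_erase_add (Finset.image (betaNum s κ) Finset.univ)
      (fun z => z) hyA
    have h5 : ∑ z ∈ Finset.image (betaNum s ν) Finset.univ, z
        = ∑ z ∈ Finset.image (betaNum s κ) Finset.univ, z - betaNum s κ b + x := by
      rw [hβ, Finset.sum_insert (fun hmem => hxA (Finset.mem_of_mem_erase hmem))]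
      omega
    have h7 : ∑ i : Fin r, ((κ i : ℤ) - (ν i : ℤ))
        = ∑ i : Fin r, (betaNum s κ i - betaNum s ν i) :=
      Finset.sum_congr rfl (fun i _ => by simp only [betaNum]; ring)
    rw [h7, Finset.sum_sub_distrib, ← h3, ← h4, h5, hx_def]
    ring
  have hsumN : ∑ i : Fin r, (κ i - ν i) = h := by
    have h1 : ((∑ i : Fin r, (κ i - ν i) : ℕ) : ℤ)
        = ∑ i : Fin r, ((κ i : ℤ) - (ν i : ℤ)) := by
      rw [Nat.cast_sum]
      exact Finset.sum_congr rfl (fun i _ => Nat.cast_sub (hle i))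
    rw [hsumZ] at h1
    exact_mod_cast h1
  refine ⟨hsubgoal, ⟨hnonempty, hconn, hnosq⟩, ?_⟩
  rw [← hFD, Set.ncard_coe_finset, hcardF, hsumN]
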